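/- Let R be a right ℵ₀-injective ring. For any idempotent e ∈ R with ReR = R (i.e., the two-sided ideal generated by e is all of R), the corner ring eRe is also right ℵ₀-injective. -/

import Mathlib

/-- A ring `R` is *right ℵ₀-injective* if every homomorphism of right `R`-modules
from a countably generated right ideal of `R` to `R` extends to a homomorphism of
right `R`-modules `R → R`. -/
def IsRightAleph0Injective (R : Type*) [Ring R] : Prop :=
  ∀ I : Submodule Rᵐᵒᵖ R,
    (∃ S : Set R, S.Countable ∧ Submodule.span Rᵐᵒᵖ S = I) →
    ∀ f : I →ₗ[Rᵐᵒᵖ] R, ∃ g : R →ₗ[Rᵐᵒᵖ] R, ∀ x : I, g (x : R) = f x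

/-- The corner `eRe` of a ring `R` at an element `e`, realized as the subtype of
elements `x` with `e * x = x` and `x * e = x`.  For an idempotent `e` this set
is exactly `{e * r * e : r ∈ R}`. -/
def Corner (R : Type*) [Ring R] (e : R) : Type _ :=
  {x : R // e * x = x ∧ x * e = x}

namespace Corner

variable {R : Type*} [Ring R] {e : R}

instance : Zero (Corner R e) := ⟨⟨0, by rw [mul_zero], by rw [zero_mul]⟩⟩

instance : Add (Corner R e) :=
  ⟨fun x y => ⟨x.1 + y.1, by rw [mul_add, x.2.1, y.2.1], by rw [add_mul, x.2.2, y.2.2]⟩⟩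

instance : Neg (Corner R e) :=
  ⟨fun x => ⟨-x.1, by rw [mul_neg, x.2.1], by rw [neg_mul, x.2.2]⟩⟩

instance : Mul (Corner R e) :=
  ⟨fun x y => ⟨x.1 * y.1, by rw [← mul_assoc, x.2.1], by rw [mul_assoc, y.2.2]⟩⟩

instance : AddCommGroup (Corner R e) where
  add := (· + ·)
  add_assoc a b c := Subtype.ext (add_assoc a.1 b.1 c.1)
  zero_add a := Subtype.ext (zero_add a.1)
  add_zero a := Subtype.ext (add_zero a.1)
  add_comm a b := Subtype.ext (add_comm a.1 b.1)
  neg_add_cancel a := Subtype.ext (neg_add_cancel a.1)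
  nsmul := nsmulRec
  zsmul := zsmulRec

/-- The corner ring `eRe` of a ring `R` at an idempotent `e`, with the
multiplication inherited from `R` and identity element `e`. -/
def ring (he : IsIdempotentElem e) : Ring (Corner R e) :=
  letI : One (Corner R e) := ⟨⟨e, he, he⟩⟩
  { (inferInstance : AddCommGroup (Corner R e)) with
    mul := (· * ·)
    mul_assoc := fun a b c => Subtype.ext (mul_assoc a.1 b.1 c.1)
    one := 1
    one_mul := fun a => Subtype.ext a.2.1
    mul_one := fun a => Subtype.ext a.2.2
    left_distrib := fun a b c => Subtype.ext (mul_add a.1 b.1 c.1)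
    right_distrib := fun a b c => Subtype.ext (add_mul a.1 b.1 c.1)
    zero_mul := fun a => Subtype.ext (zero_mul a.1)
    mul_zero := fun a => Subtype.ext (mul_zero a.1) }

end Corner

/-- Let `R` be a right ℵ₀-injective ring. For any idempotent `e ∈ R` with
`ReR = R` (the two-sided ideal generated by `e` is all of `R`), the corner
ring `eRe` is also right ℵ₀-injective. -/
theorem corner_isRightAleph0Injective {R : Type*} [Ring R]
    (hR : IsRightAleph0Injective R) (e : R) (he : IsIdempotentElem e)
    (hfull : TwoSidedIdeal.span {e} = (⊤ : TwoSidedIdeal R)) :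
    @IsRightAleph0Injective (Corner R e) (Corner.ring he) := by
  letI : Ring (Corner R e) := Corner.ring he
  intro I hI f
  obtain ⟨T, hTc, hTspan⟩ := hI
  classical
  -- the generators of `I` viewed in `R`, and their images under `f` viewed in `R`
  set v : I → R := fun x => (x : Corner R e).1 with hv
  set w : I → R := fun x => (f x).1 with hw
  set T0 : (I →₀ Rᵐᵒᵖ) →ₗ[Rᵐᵒᵖ] R := Finsupp.linearCombination Rᵐᵒᵖ v with hT0
  set T1 : (I →₀ Rᵐᵒᵖ) →ₗ[Rᵐᵒᵖ] R := Finsupp.linearCombination Rᵐᵒᵖ w with hT1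
  -- additive maps for pulling `v` and `w` through sums
  have hvadd : ∀ x y : I, v (x + y) = v x + v y := fun x y => rfl
  have hwadd : ∀ x y : I, w (x + y) = w x + w y := fun x y => by
    show (f (x + y)).1 = _
    rw [map_add f]
    rfl
  set η : I →+ R := AddMonoidHom.mk' v hvadd with hη
  set ψ : I →+ R := AddMonoidHom.mk' w hwadd with hψ
  -- key computation: kernel of T0 is contained in kernel of T1
  have hker : LinearMap.ker T0 ≤ LinearMap.ker T1 := by
    intro l hl
    rw [LinearMap.mem_ker] at hl ⊢
    -- first: (T1 l) * (a * e) = 0 for every a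
    have key : ∀ a : R, (T1 l) * (a * e) = 0 := by
      intro a
      have hσ1 : ∀ r : R, e * (e * (r * a * e)) = e * (r * a * e) := fun r => by
        rw [← mul_assoc, he]
      have hσ2 : ∀ r : R, (e * (r * a * e)) * e = e * (r * a * e) := fun r => by
        rw [mul_assoc, mul_assoc (r * a), he]
      set σ : Rᵐᵒᵖ → Corner R e := fun r =>
        ⟨e * (r.unop * a * e), hσ1 r.unop, hσ2 r.unop⟩ with hσ
      -- the twisted element of I
      set u : I := l.sum (fun x r => MulOpposite.op (σ r) • x) with hu
      -- each summand of (T1 l) * (a * e) is w of the twisted generator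
      have hz2 : ∀ (x : I) (r : Rᵐᵒᵖ),
          (r • w x) * (a * e) = w (MulOpposite.op (σ r) • x) := by
        intro x r
        have h1 : f (MulOpposite.op (σ r) • x) = f x * σ r := by
          rw [map_smul]
          exact MulOpposite.smul_eq_mul_unop _ _
        show (r • w x) * (a * e) = (f (MulOpposite.op (σ r) • x)).1
        rw [h1]
        show (r • w x) * (a * e) = (f x).1 * (e * (r.unop * a * e))
        rw [← mul_assoc ((f x).1), (f x).2.2, MulOpposite.smul_eq_mul_unop]
        show w x * r.unop * (a * e) = w x * (r.unop * a * e)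
        simp only [mul_assoc]
      have hz1 : (T1 l) * (a * e) = w u := by
        rw [hT1, Finsupp.linearCombination_apply, Finsupp.sum_mul,
          Finsupp.sum_congr (g2 := fun x r => w (MulOpposite.op (σ r) • x))
            (fun x _ => hz2 x (l x)), hu]
        exact (map_finsuppSum ψ l _).symm
      -- the twisted element is zero
      have hvz2 : ∀ (x : I) (r : Rᵐᵒᵖ),
          (r • v x) * (a * e) = v (MulOpposite.op (σ r) • x) := by
        intro x r
        have h1 : ((MulOpposite.op (σ r) • x : I) : Corner R e)
            = (x : Corner R e) * σ r := by
          rw [Submodule.coe_smul]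
          exact MulOpposite.smul_eq_mul_unop _ _
        show (r • v x) * (a * e) = ((MulOpposite.op (σ r) • x : I) : Corner R e).1
        rw [h1]
        show (r • v x) * (a * e) = (x : Corner R e).1 * (e * (r.unop * a * e))
        rw [← mul_assoc ((x : Corner R e).1), (x : Corner R e).2.2,
          MulOpposite.smul_eq_mul_unop]
        show v x * r.unop * (a * e) = v x * (r.unop * a * e)
        simp only [mul_assoc]
      have hvu : v u = 0 := by
        have : v u = (T0 l) * (a * e) := by
          rw [hT0, Finsupp.linearCombination_apply, Finsupp.sum_mul,
            Finsupp.sum_congr (g2 := fun x r => v (MulOpposite.op (σ r) • x))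
              (fun x _ => hvz2 x (l x)), hu]
          exact map_finsuppSum η l _
        rw [this, hl, zero_mul]
      have hu0 : u = 0 := by
        rw [← Submodule.coe_eq_zero]
        exact Subtype.ext hvu
      rw [hz1, hu0]
      show (f 0).1 = 0
      rw [map_zero f]
      rfl
    -- two-sided ideal of elements annihilating `T1 l` on the right
    set z : R := T1 l with hz
    let A : TwoSidedIdeal R := TwoSidedIdeal.mk'
      {t : R | ∀ p q : R, z * (p * t * q) = 0}
      (fun p q => by simp)
      (fun {x y} hx hy p q => by
        rw [mul_add, add_mul, mul_add, hx p q, hy p q, add_zero])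
      (fun {x} hx p q => by
        rw [mul_neg, neg_mul, mul_neg, hx p q, neg_zero])
      (fun {x y} hy p q => by
        have := hy (p * x) q
        simp only [mul_assoc] at this ⊢
        exact this)
      (fun {x y} hx p q => by
        have := hx p (y * q)
        simp only [mul_assoc] at this ⊢
        exact this)
    have heA : e ∈ A := by
      rw [TwoSidedIdeal.mem_mk']
      intro p q
      rw [← mul_assoc, key p, zero_mul]
    have h1A : (1 : R) ∈ A := by
      have h1 : (1 : R) ∈ TwoSidedIdeal.span {e} := by rw [hfull]; trivial
      exact TwoSidedIdeal.mem_span_iff.mp h1 A (by simpa using heA)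
    rw [TwoSidedIdeal.mem_mk'] at h1A
    have := h1A 1 1
    simpa using this
  -- the right ideal of R generated by I is countably generated
  have hrange : LinearMap.range T0 = Submodule.span Rᵐᵒᵖ (Set.range v) := by
    rw [hT0, Finsupp.range_linearCombination]
  have hJcg : ∃ Su : Set R, Su.Countable ∧
      Submodule.span Rᵐᵒᵖ Su = LinearMap.range T0 := by
    refine ⟨Subtype.val '' T, hTc.image _, le_antisymm ?_ ?_⟩
    · rw [hrange, Submodule.span_le]
      rintro - ⟨t, htT, rfl⟩
      have htI : t ∈ I := hTspan ▸ Submodule.subset_span htT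
      exact Submodule.subset_span ⟨⟨t, htI⟩, rfl⟩
    · rw [hrange, Submodule.span_le]
      rintro - ⟨x, rfl⟩
      have hx : (x : Corner R e) ∈ Submodule.span (Corner R e)ᵐᵒᵖ T := by
        rw [hTspan]; exact x.2
      show (x : Corner R e).1 ∈ Submodule.span Rᵐᵒᵖ (Subtype.val '' T)
      refine Submodule.span_induction (p := fun y _ =>
          y.1 ∈ Submodule.span Rᵐᵒᵖ (Subtype.val '' T)) ?_ ?_ ?_ ?_ hx
      · intro y hy; exact Submodule.subset_span ⟨y, hy, rfl⟩
      · exact Submodule.zero_mem _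
      · intro y z _ _ hy hz; exact Submodule.add_mem _ hy hz
      · intro r y _ hy
        have h7 : (r • y : Corner R e).1
            = MulOpposite.op (r.unop.1) • y.1 := rfl
        rw [h7]
        exact Submodule.smul_mem _ _ hy
  -- the extension of f to the right ideal `range T0`
  set F : LinearMap.range T0 →ₗ[Rᵐᵒᵖ] R :=
    ((LinearMap.ker T0).liftQ T1 hker).comp
      (T0.quotKerEquivRange.symm.toLinearMap) with hF
  obtain ⟨g, hg⟩ := hR (LinearMap.range T0) hJcg F
  set c : R := g 1 with hc
  have hgc : ∀ r : R, g r = c * r := by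
    intro r
    have h8 : r = MulOpposite.op r • (1 : R) := by
      rw [op_smul_eq_mul, one_mul]
    rw [h8, map_smul, op_smul_eq_mul, ← hc, ← h8]
  have hcI : ∀ x : I, c * v x = w x := by
    intro x
    have hm : v x ∈ LinearMap.range T0 := by
      refine ⟨Finsupp.single x 1, ?_⟩
      rw [hT0, Finsupp.linearCombination_single, one_smul]
    have h1 : g (v x) = F ⟨v x, hm⟩ := hg ⟨v x, hm⟩
    have h2 : (⟨v x, hm⟩ : LinearMap.range T0)
        = ⟨T0 (Finsupp.single x 1), LinearMap.mem_range_self _ _⟩ := by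
      apply Subtype.ext
      show v x = T0 (Finsupp.single x 1)
      rw [hT0, Finsupp.linearCombination_single, one_smul]
    have h3 : F ⟨T0 (Finsupp.single x 1), LinearMap.mem_range_self _ _⟩
        = T1 (Finsupp.single x 1) := by
      rw [hF, LinearMap.comp_apply, LinearEquiv.coe_toLinearMap,
        LinearMap.quotKerEquivRange_symm_apply_image, Submodule.mkQ_apply,
        Submodule.liftQ_apply]
    have h4 : T1 (Finsupp.single x 1) = w x := by
      rw [hT1, Finsupp.linearCombination_single, one_smul]
    rw [← h4, ← h3, ← h2, ← h1, hgc]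
  -- the element of the corner ring giving the extension
  have hd1 : e * (e * (c * e)) = e * (c * e) := by rw [← mul_assoc, he]
  have hd2 : (e * (c * e)) * e = e * (c * e) := by
    rw [mul_assoc, mul_assoc c, he]
  set d : Corner R e := ⟨e * (c * e), hd1, hd2⟩ with hd
  refine ⟨{ toFun := fun y => d * y
            map_add' := fun y z => Subtype.ext (mul_add d.1 y.1 z.1)
            map_smul' := fun r y => Subtype.ext (by
              show d.1 * (r • y : Corner R e).1 = (r • (d * y) : Corner R e).1
              have h5 : (r • y : Corner R e) = y * r.unop :=
                MulOpposite.smul_eq_mul_unop _ _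
              have h6 : (r • (d * y) : Corner R e) = d * y * r.unop :=
                MulOpposite.smul_eq_mul_unop _ _
              rw [h5, h6]
              show d.1 * (y.1 * r.unop.1) = (d.1 * y.1) * r.unop.1
              show e * (c * e) * (y.1 * r.unop.1)
                = (e * (c * e) * y.1) * r.unop.1
              simp only [mul_assoc]) }, ?_⟩
  intro x
  apply Subtype.ext
  show d.1 * (x : Corner R e).1 = (f x).1
  show (e * (c * e)) * (x : Corner R e).1 = (f x).1
  rw [mul_assoc, mul_assoc c, (x : Corner R e).2.1, hcI x]
  exact (f x).2.1
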